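/- If G is a triangle-free graph on n vertices with diameter 2, then the sum over all vertices v of deg(v)^2 is at least n(n-1). -/

import Mathlib

open SimpleGraph Finset

/-- A graph has diameter 2: any two distinct vertices are adjacent or have a common
neighbour. -/
def DiamTwo {V : Type*} (G : SimpleGraph V) : Prop :=
  ∀ u v : V, u ≠ v → G.Adj u v ∨ ∃ w, G.Adj u w ∧ G.Adj w v

/-- In a triangle-free diameter-2 graph on `n` vertices, `∑ deg(v)² ≥ n(n-1)`. -/
theorem stmt4 {V : Type*} [Fintype V] (G : SimpleGraph V) [DecidableRel G.Adj]
    (htf : G.CliqueFree 3) (hdiam : DiamTwo G) :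
    Fintype.card V * (Fintype.card V - 1) ≤ ∑ v : V, (G.degree v) ^ 2 := by
  classical
  rcases isEmpty_or_nonempty V with hV | hV
  · simp [Fintype.card_eq_zero]
  set S : Finset (V × V) := univ.filter (fun p => p.1 ≠ p.2) with hS
  set T : Finset (V × V × V) :=
    univ.filter (fun t => G.Adj t.2.1 t.1 ∧ G.Adj t.2.1 t.2.2) with hT
  have hScard : S.card = Fintype.card V * (Fintype.card V - 1) := by
    have : S = univ \ univ.filter (fun p : V × V => p.1 = p.2) := by
      ext p
      simp [hS]
    rw [this, card_sdiff_of_subset (filter_subset _ _)]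
    have hdiag : (univ.filter (fun p : V × V => p.1 = p.2)).card = Fintype.card V := by
      rw [← Fintype.card_coe]
      apply Fintype.card_congr
      exact ⟨fun p => p.1.1, fun v => ⟨(v, v), by simp⟩, fun p => by
        obtain ⟨⟨a, b⟩, hp⟩ := p
        simp at hp
        subst hp
        rfl, fun v => rfl⟩
    rw [hdiag, ← Finset.card_univ, ← univ_product_univ, card_product, card_univ,
      Nat.mul_sub_one, Nat.mul_comm]
  have hTcard : T.card = ∑ v : V, (G.degree v) ^ 2 := by
    rw [Finset.card_eq_sum_card_fiberwise (f := fun t : V × V × V => t.2.1)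
      (t := (univ : Finset V)) (fun _ _ => mem_univ _)]
    refine Finset.sum_congr rfl fun v _ => ?_
    have : (G.degree v) ^ 2 = (G.neighborFinset v ×ˢ G.neighborFinset v).card := by
      rw [card_product, ← SimpleGraph.card_neighborFinset_eq_degree, sq]
    rw [this]
    apply Finset.card_bij (fun t _ => (t.1, t.2.2))
    · rintro ⟨a, b, c⟩ ht
      simp only [hT, mem_filter, mem_univ, true_and] at ht
      obtain ⟨⟨h1, h2⟩, h3⟩ := ht
      subst h3
      simp [SimpleGraph.mem_neighborFinset, h1, h2]
    · rintro ⟨a, b, c⟩ ht ⟨a', b', c'⟩ ht' h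
      simp only [hT, mem_filter, mem_univ, true_and] at ht ht'
      simp only [Prod.mk.injEq] at h
      obtain ⟨h1, h2⟩ := h
      simp [h1, h2, ht.2, ht'.2]
    · rintro ⟨a, c⟩ hp
      simp only [mem_product, SimpleGraph.mem_neighborFinset] at hp
      exact ⟨(a, v, c), by simp [hT, hp.1, hp.2], rfl⟩
  rw [← hScard, ← hTcard]
  set f : V × V → V × V × V := fun p =>
    if G.Adj p.1 p.2 then (p.2, p.1, p.2)
    else (p.1, Classical.epsilon (fun w => G.Adj p.1 w ∧ G.Adj w p.2), p.2) with hf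
  apply Finset.card_le_card_of_injOn f
  · intro p hp
    simp only [hS, mem_coe, mem_filter, mem_univ, true_and] at hp
    by_cases h : G.Adj p.1 p.2
    · simp only [hf, if_pos h, hT, mem_coe, mem_filter, mem_univ, true_and]
      exact ⟨h, h⟩
    · have hex : ∃ w, G.Adj p.1 w ∧ G.Adj w p.2 := (hdiam p.1 p.2 hp).resolve_left h
      have hw := Classical.epsilon_spec hex
      simp only [hf, if_neg h, hT, mem_coe, mem_filter, mem_univ, true_and]
      exact ⟨hw.1.symm, hw.2⟩
  · intro p hp q hq hpq
    simp only [hS, coe_filter, Set.mem_setOf_eq, mem_univ, true_and] at hp hq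
    by_cases h1 : G.Adj p.1 p.2 <;> by_cases h2 : G.Adj q.1 q.2 <;>
      simp only [hf, if_pos, if_neg, h1, h2, if_true, if_false, Prod.mk.injEq] at hpq
    · exact Prod.ext hpq.2.1 hpq.1
    · exact absurd (hpq.1.symm.trans hpq.2.2) hq
    · exact absurd (hpq.1.trans hpq.2.2.symm) hp
    · exact Prod.ext hpq.1 hpq.2.2
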